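/- Let n be an even positive integer and let G be a connected graph without a matching of size n/2. Let V(G) = S ∪ Q ∪ I be any partition of the vertex set satisfying: (1) |Q| + 2|S| = min{v(G), n − 1}; (2) I is an independent set, and if v(G) ≤ n − 1 then I = ∅; (3) every vertex in Q has at most one neighbor in I; (4) every vertex in I has degree less than n/2. Then e(G) ≤ C(|Q| + |S|, 2) + |I|·|S| + |Q|, where C(m,2) = m(m−1)/2. -/

import Mathlib

set_option maxHeartbeats 800000


/-- A matching of size `m` in `G`: a set of `m` pairwise disjoint edges of `G`. -/
def HasMatching {V : Type*} (G : SimpleGraph V) (m : ℕ) : Prop :=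
  ∃ M : Finset (Sym2 V), M.card = m ∧ (∀ e ∈ M, e ∈ G.edgeSet) ∧
    (∀ e ∈ M, ∀ f ∈ M, e ≠ f → ∀ v : V, v ∈ e → v ∉ f)

theorem stmt7 (n : ℕ) (hn : Even n) (hn0 : 0 < n)
    (V : Type*) [Fintype V] (G : SimpleGraph V) (hconn : G.Connected)
    (hnm : ¬ HasMatching G (n / 2))
    (S Q I : Set V)
    (hpart : S ∪ Q ∪ I = Set.univ)
    (hSQ : Disjoint S Q) (hSI : Disjoint S I) (hQI : Disjoint Q I)
    (h1 : Q.ncard + 2 * S.ncard = min (Fintype.card V) (n - 1))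
    (h2 : ∀ u ∈ I, ∀ v ∈ I, ¬ G.Adj u v)
    (h2' : Fintype.card V ≤ n - 1 → I = ∅)
    (h3 : ∀ q ∈ Q, ∀ v₁ ∈ I, ∀ v₂ ∈ I, G.Adj q v₁ → G.Adj q v₂ → v₁ = v₂)
    (h4 : ∀ v ∈ I, (G.neighborSet v).ncard < n / 2) :
    (G.edgeSet.ncard : ℝ) ≤
      ((Q.ncard + S.ncard : ℝ) * ((Q.ncard + S.ncard : ℝ) - 1)) / 2
        + (I.ncard : ℝ) * (S.ncard : ℝ) + (Q.ncard : ℝ) := by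
  classical
  -- Finset versions
  set A : Set V := S ∪ Q with hA
  have hSfin : S.Finite := Set.toFinite S
  have hQfin : Q.Finite := Set.toFinite Q
  have hIfin : I.Finite := Set.toFinite I
  have hAfin : A.Finite := Set.toFinite A
  set SF := hSfin.toFinset
  set QF := hQfin.toFinset
  set IF := hIfin.toFinset
  set AF := hAfin.toFinset
  -- dart sets
  set D1 : Finset G.Dart := Finset.univ.filter (fun d => d.toProd.1 ∈ A ∧ d.toProd.2 ∈ A)
  set D2 : Finset G.Dart := Finset.univ.filter
    (fun d => (d.toProd.1 ∈ I ∧ d.toProd.2 ∈ S) ∨ (d.toProd.1 ∈ S ∧ d.toProd.2 ∈ I))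
  set D3 : Finset G.Dart := Finset.univ.filter
    (fun d => (d.toProd.1 ∈ I ∧ d.toProd.2 ∈ Q) ∨ (d.toProd.1 ∈ Q ∧ d.toProd.2 ∈ I))
  have hcover : (Finset.univ : Finset G.Dart) ⊆ D1 ∪ D2 ∪ D3 := by
    intro d _
    have h1' : d.toProd.1 ∈ S ∪ Q ∪ I := hpart ▸ Set.mem_univ _
    have h2'' : d.toProd.2 ∈ S ∪ Q ∪ I := hpart ▸ Set.mem_univ _
    have hadj := d.adj
    have hnII : ¬ (d.toProd.1 ∈ I ∧ d.toProd.2 ∈ I) := by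
      rintro ⟨ha, hb⟩; exact h2 _ ha _ hb hadj
    simp only [D1, D2, D3, Finset.mem_union, Finset.mem_filter, Finset.mem_univ, true_and, hA]
    simp only [Set.mem_union] at h1' h2'' ⊢
    tauto
  have hcardall : Fintype.card G.Dart ≤ D1.card + D2.card + D3.card := by
    calc Fintype.card G.Dart = (Finset.univ : Finset G.Dart).card := Finset.card_univ.symm
      _ ≤ (D1 ∪ D2 ∪ D3).card := Finset.card_le_card hcover
      _ ≤ (D1 ∪ D2).card + D3.card := Finset.card_union_le _ _
      _ ≤ D1.card + D2.card + D3.card := by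
          have := Finset.card_union_le D1 D2; omega
  -- bound D1
  have hD1 : D1.card ≤ AF.card * AF.card - AF.card := by
    rw [← Finset.offDiag_card]
    apply Finset.card_le_card_of_injOn (fun d => d.toProd)
    · intro d hd
      simp only [D1, Finset.mem_coe, Finset.mem_filter] at hd
      simp only [Finset.mem_coe, Finset.mem_offDiag, AF, Set.Finite.mem_toFinset]
      exact ⟨hd.2.1, hd.2.2, d.adj.ne⟩
    · intro d _ d' _ h
      exact SimpleGraph.Dart.ext _ _ h
  -- bound D2
  have hD2 : D2.card ≤ IF.card * SF.card + SF.card * IF.card := by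
    have : D2.card ≤ ((IF ×ˢ SF) ∪ (SF ×ˢ IF)).card := by
      apply Finset.card_le_card_of_injOn (fun d => d.toProd)
      · intro d hd
        simp only [D2, Finset.mem_coe, Finset.mem_filter] at hd
        simp only [Finset.mem_coe, Finset.mem_union, Finset.mem_product, SF, IF,
          Set.Finite.mem_toFinset]
        tauto
      · intro d _ d' _ h
        exact SimpleGraph.Dart.ext _ _ h
    calc D2.card ≤ ((IF ×ˢ SF) ∪ (SF ×ˢ IF)).card := this
      _ ≤ (IF ×ˢ SF).card + (SF ×ˢ IF).card := Finset.card_union_le _ _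
      _ = IF.card * SF.card + SF.card * IF.card := by rw [Finset.card_product, Finset.card_product]
  -- bound D3
  have hD3 : D3.card ≤ QF.card * 2 := by
    have : D3.card ≤ (QF ×ˢ (Finset.univ : Finset Bool)).card := by
      apply Finset.card_le_card_of_injOn
        (fun d => if d.toProd.1 ∈ Q then (d.toProd.1, true) else (d.toProd.2, false))
      · intro d hd
        simp only [D3, Finset.mem_coe, Finset.mem_filter] at hd
        simp only [Finset.mem_coe]
        split_ifs with hq
        · simp only [Finset.mem_product, Finset.mem_univ, and_true, QF,
            Set.Finite.mem_toFinset]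
          exact hq
        · simp only [Finset.mem_product, Finset.mem_univ, and_true, QF,
            Set.Finite.mem_toFinset]
          rcases hd.2 with ⟨_, h⟩ | ⟨h, _⟩
          · exact h
          · exact absurd h hq
      · intro d hd d' hd' h
        simp only [D3, Finset.mem_coe, Finset.mem_filter] at hd hd'
        by_cases hq : d.toProd.1 ∈ Q <;> by_cases hq' : d'.toProd.1 ∈ Q <;>
          simp only [hq, hq', if_pos, if_neg, Prod.mk.injEq, not_false_iff] at h
        · -- both first coords in Q
          obtain ⟨heq, -⟩ := h
          have hdI : d.toProd.2 ∈ I := by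
            rcases hd.2 with ⟨h1, _⟩ | ⟨_, h2⟩
            · exact absurd (Set.disjoint_left.mp hQI hq) (fun hh => hh h1)
            · exact h2
          have hd'I : d'.toProd.2 ∈ I := by
            rcases hd'.2 with ⟨h1, _⟩ | ⟨_, h2⟩
            · exact absurd (Set.disjoint_left.mp hQI hq') (fun hh => hh h1)
            · exact h2
          have := h3 _ hq _ hdI _ hd'I d.adj (heq ▸ d'.adj)
          exact SimpleGraph.Dart.ext _ _ (Prod.ext heq this)
        · exact absurd h.2 (by simp)
        · exact absurd h.2 (by simp)
        · -- both first coords not in Q, so first coords in I, second in Q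
          obtain ⟨heq, -⟩ := h
          have hdQ : d.toProd.2 ∈ Q ∧ d.toProd.1 ∈ I := by
            rcases hd.2 with ⟨h1, h2⟩ | ⟨h1, _⟩
            · exact ⟨h2, h1⟩
            · exact absurd h1 hq
          have hd'Q : d'.toProd.2 ∈ Q ∧ d'.toProd.1 ∈ I := by
            rcases hd'.2 with ⟨h1, h2⟩ | ⟨h1, _⟩
            · exact ⟨h2, h1⟩
            · exact absurd h1 hq'
          have := h3 _ hdQ.1 _ hdQ.2 _ hd'Q.2 d.adj.symm (heq ▸ d'.adj.symm)
          exact SimpleGraph.Dart.ext _ _ (Prod.ext this heq)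
    calc D3.card ≤ (QF ×ˢ (Finset.univ : Finset Bool)).card := this
      _ = QF.card * 2 := by rw [Finset.card_product]; simp
  -- combine in ℕ
  have hdartcard : Fintype.card G.Dart = 2 * G.edgeFinset.card :=
    SimpleGraph.dart_card_eq_twice_card_edges G
  have hmain : 2 * G.edgeFinset.card ≤
      (AF.card * AF.card - AF.card) + (IF.card * SF.card + SF.card * IF.card) + QF.card * 2 := by
    rw [← hdartcard]
    calc Fintype.card G.Dart ≤ D1.card + D2.card + D3.card := hcardall
      _ ≤ _ := by gcongr
  -- translate cards
  have hSc : S.ncard = SF.card := Set.ncard_eq_toFinset_card S hSfin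
  have hQc : Q.ncard = QF.card := Set.ncard_eq_toFinset_card Q hQfin
  have hIc : I.ncard = IF.card := Set.ncard_eq_toFinset_card I hIfin
  have hAc : AF.card = QF.card + SF.card := by
    have : AF = SF ∪ QF := by
      ext x
      simp only [AF, SF, QF, Set.Finite.mem_toFinset, Finset.mem_union, hA, Set.mem_union]
    rw [this, Finset.card_union_of_disjoint (by
      rw [Finset.disjoint_left]
      intro a ha hb
      simp only [SF, QF, Set.Finite.mem_toFinset] at ha hb
      exact Set.disjoint_left.mp hSQ ha hb)]
    omega
  have hEc : G.edgeSet.ncard = G.edgeFinset.card := by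
    rw [Set.ncard_eq_toFinset_card']
    congr 1
  -- final real arithmetic
  rw [hEc, hSc, hQc, hIc]
  have key : (2 * G.edgeFinset.card : ℝ) ≤
      ((QF.card + SF.card : ℝ) * ((QF.card + SF.card : ℝ) - 1))
        + 2 * (IF.card : ℝ) * (SF.card : ℝ) + 2 * (QF.card : ℝ) := by
    have h2' : (2 * G.edgeFinset.card : ℝ) ≤
        ((AF.card * AF.card - AF.card : ℕ) : ℝ)
          + ((IF.card * SF.card + SF.card * IF.card : ℕ) : ℝ) + ((QF.card * 2 : ℕ) : ℝ) := by
      exact_mod_cast hmain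
    have hsub : ((AF.card * AF.card - AF.card : ℕ) : ℝ)
        = (AF.card : ℝ) * (AF.card : ℝ) - (AF.card : ℝ) := by
      have : AF.card ≤ AF.card * AF.card := by nlinarith [Nat.zero_le AF.card]
      push_cast [Nat.cast_sub this]
      ring
    rw [hsub] at h2'
    have hAcast : (AF.card : ℝ) = (QF.card : ℝ) + (SF.card : ℝ) := by
      rw [hAc]; push_cast; ring
    rw [hAcast] at h2'
    push_cast at h2' ⊢
    nlinarith [h2']
  nlinarith [key]
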